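/- Sparsity equation for the Group-LASSO norm (Lemma 3). Let G₁,…,G_M be a partition of {1,…,p}, let ρ > 0 and r > 0, and let t* = u + v ∈ ℝ^p with ‖u‖_GL ≤ ρ/20 and v group-sparse, i.e. v_{G_k} = 0 for all k ∉ I for some I ⊆ {1,…,M}. Assume 100·|I| ≤ (ρ/r)². Then for every w ∈ ℝ^p with ‖w‖_GL = ρ and ‖w‖₂ ≤ r there exists z* ∈ ℝ^p such that ‖z*_{G_k}‖₂ ≤ 1 for every k ∈ {1,…,M}, ⟨z*, v⟩ = ‖v‖_GL (so z* is a subgradient of ‖·‖_GL at v, hence z* lies in Γ_{t*}(ρ)), and ⟨z*, w⟩ ≥ 4ρ/5. In particular, Δ(ρ) := inf{ sup_{z*∈Γ_{t*}(ρ)} ⟨z*, w⟩ : ‖w‖_GL = ρ, ‖w‖₂ ≤ r } ≥ 4ρ/5, i.e. ρ satisfies the sparsity equation for the Group-LASSO norm. -/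
import Mathlib


/-- Euclidean norm on `Fin p → ℝ`. -/
noncomputable def euclNorm {p : ℕ} (t : Fin p → ℝ) : ℝ :=
  Real.sqrt (∑ i, t i ^ 2)

/-- Coordinate projection of `t` onto the coordinates in `G`. -/
def coordProj {p : ℕ} (G : Finset (Fin p)) (t : Fin p → ℝ) : Fin p → ℝ :=
  fun i => if i ∈ G then t i else 0

/-- The Group-LASSO norm associated with the groups `G₁,…,G_M`. -/
noncomputable def groupLassoNorm {p M : ℕ} (G : Fin M → Finset (Fin p))
    (t : Fin p → ℝ) : ℝ :=
  ∑ k, euclNorm (coordProj (G k) t)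

/-- Euclidean inner product on `Fin p → ℝ`. -/
def dotProd {p : ℕ} (z t : Fin p → ℝ) : ℝ := ∑ i, z i * t i

lemma sum_sq_coordProj {p : ℕ} (G : Finset (Fin p)) (t : Fin p → ℝ) :
    ∑ i, coordProj G t i ^ 2 = ∑ i ∈ G, t i ^ 2 := by
  simp only [coordProj]
  rw [Finset.sum_congr rfl (fun i _ => by
    show (if i ∈ G then t i else 0) ^ 2 = if i ∈ G then t i ^ 2 else 0
    split <;> simp)]
  rw [Finset.sum_ite_mem, Finset.univ_inter]

lemma euclNorm_coordProj {p : ℕ} (G : Finset (Fin p)) (t : Fin p → ℝ) :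
    euclNorm (coordProj G t) = Real.sqrt (∑ i ∈ G, t i ^ 2) := by
  rw [euclNorm, sum_sq_coordProj]

lemma sum_partition {p M : ℕ} (G : Fin M → Finset (Fin p))
    (hdisj : ∀ k l, k ≠ l → Disjoint (G k) (G l))
    (hcover : ∀ i : Fin p, ∃ k, i ∈ G k) (f : Fin p → ℝ) :
    ∑ i, f i = ∑ k, ∑ i ∈ G k, f i := by
  rw [← Finset.sum_biUnion (fun k _ l _ hkl => hdisj k l hkl)]
  apply Finset.sum_congr _ (fun _ _ => rfl)
  ext i
  simp only [Finset.mem_univ, Finset.mem_biUnion, true_iff, true_and]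
  exact hcover i

lemma sqrt_sum_sq_add_le {ι : Type*} (s : Finset ι) (f g : ι → ℝ) :
    Real.sqrt (∑ i ∈ s, (f i + g i) ^ 2)
      ≤ Real.sqrt (∑ i ∈ s, f i ^ 2) + Real.sqrt (∑ i ∈ s, g i ^ 2) := by
  have hA : (0:ℝ) ≤ ∑ i ∈ s, f i ^ 2 := by positivity
  have hB : (0:ℝ) ≤ ∑ i ∈ s, g i ^ 2 := by positivity
  have hcs := Real.sum_mul_le_sqrt_mul_sqrt s f g
  have key : ∑ i ∈ s, (f i + g i) ^ 2
      ≤ (Real.sqrt (∑ i ∈ s, f i ^ 2) + Real.sqrt (∑ i ∈ s, g i ^ 2)) ^ 2 := by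
    have h1 : ∑ i ∈ s, (f i + g i) ^ 2
        = ∑ i ∈ s, f i ^ 2 + 2 * ∑ i ∈ s, f i * g i + ∑ i ∈ s, g i ^ 2 := by
      have hmid : ∑ x ∈ s, 2 * f x * g x = 2 * ∑ i ∈ s, f i * g i := by
        rw [Finset.mul_sum]; exact Finset.sum_congr rfl fun i _ => by ring
      rw [Finset.sum_congr rfl (fun i _ => add_sq (f i) (g i)),
        Finset.sum_add_distrib, Finset.sum_add_distrib, hmid]
    have h2 : (Real.sqrt (∑ i ∈ s, f i ^ 2) + Real.sqrt (∑ i ∈ s, g i ^ 2)) ^ 2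
        = ∑ i ∈ s, f i ^ 2
          + 2 * (Real.sqrt (∑ i ∈ s, f i ^ 2) * Real.sqrt (∑ i ∈ s, g i ^ 2))
          + ∑ i ∈ s, g i ^ 2 := by
      rw [add_sq, Real.sq_sqrt hA, Real.sq_sqrt hB]; ring
    rw [h1, h2]
    linarith
  calc Real.sqrt (∑ i ∈ s, (f i + g i) ^ 2)
      ≤ Real.sqrt ((Real.sqrt (∑ i ∈ s, f i ^ 2) + Real.sqrt (∑ i ∈ s, g i ^ 2)) ^ 2) :=
        Real.sqrt_le_sqrt key
    _ = _ := Real.sqrt_sq (by positivity)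

lemma groupLassoNorm_add_le {p M : ℕ} (G : Fin M → Finset (Fin p)) (a b : Fin p → ℝ) :
    groupLassoNorm G (a + b) ≤ groupLassoNorm G a + groupLassoNorm G b := by
  rw [groupLassoNorm, groupLassoNorm, groupLassoNorm, ← Finset.sum_add_distrib]
  apply Finset.sum_le_sum
  intro k _
  rw [euclNorm_coordProj, euclNorm_coordProj, euclNorm_coordProj]
  exact sqrt_sum_sq_add_le (G k) a b

lemma groupLassoNorm_nonneg {p M : ℕ} (G : Fin M → Finset (Fin p)) (a : Fin p → ℝ) :
    0 ≤ groupLassoNorm G a :=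
  Finset.sum_nonneg fun _ _ => Real.sqrt_nonneg _

/-- Sparsity equation for the Group-LASSO norm (Lemma 3). -/
theorem group_lasso_sparsity_equation
    {p M : ℕ} (G : Fin M → Finset (Fin p))
    (hdisj : ∀ k l, k ≠ l → Disjoint (G k) (G l))
    (hcover : ∀ i : Fin p, ∃ k, i ∈ G k)
    (ρ r : ℝ) (hρ : 0 < ρ) (hr : 0 < r)
    (tstar u v : Fin p → ℝ) (htstar : tstar = u + v)
    (hu : groupLassoNorm G u ≤ ρ / 20)
    (I : Finset (Fin M)) (hv : ∀ k ∉ I, coordProj (G k) v = 0)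
    (hI : 100 * (I.card : ℝ) ≤ (ρ / r) ^ 2) :
    ∀ w : Fin p → ℝ, groupLassoNorm G w = ρ → euclNorm w ≤ r →
      (∃ z : Fin p → ℝ,
        (∀ k, euclNorm (coordProj (G k) z) ≤ 1) ∧
        dotProd z v = groupLassoNorm G v ∧
        (∀ h : Fin p → ℝ,
          dotProd z h ≤ groupLassoNorm G (v + h) - groupLassoNorm G v) ∧
        4 * ρ / 5 ≤ dotProd z w) ∧
      4 * ρ / 5 ≤ sSup ((fun z : Fin p → ℝ => dotProd z w) ''
        {z | ∃ v' : Fin p → ℝ, groupLassoNorm G (tstar - v') ≤ ρ / 20 ∧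
          ∀ h : Fin p → ℝ,
            dotProd z h ≤ groupLassoNorm G (v' + h) - groupLassoNorm G v'}) := by
  classical
  intro w hwGL hw2
  -- the group containing each index
  set κ : Fin p → Fin M := fun i => (hcover i).choose with hκdef
  have hκmem : ∀ i, i ∈ G (κ i) := fun i => (hcover i).choose_spec
  have hκuniq : ∀ i k, i ∈ G k → κ i = k := by
    intro i k hik
    by_contra hne
    exact Finset.disjoint_left.mp (hdisj _ _ hne) (hκmem i) hik
  set nv : Fin M → ℝ := fun k => Real.sqrt (∑ i ∈ G k, v i ^ 2) with hnvdef
  set nw : Fin M → ℝ := fun k => Real.sqrt (∑ i ∈ G k, w i ^ 2) with hnwdef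
  have hnv_nonneg : ∀ k, 0 ≤ nv k := fun k => Real.sqrt_nonneg _
  have hnw_nonneg : ∀ k, 0 ≤ nw k := fun k => Real.sqrt_nonneg _
  have hnv_sq : ∀ k, nv k ^ 2 = ∑ i ∈ G k, v i ^ 2 :=
    fun k => Real.sq_sqrt (by positivity)
  have hnw_sq : ∀ k, nw k ^ 2 = ∑ i ∈ G k, w i ^ 2 :=
    fun k => Real.sq_sqrt (by positivity)
  have hnv_zero : ∀ k, nv k = 0 → ∀ i ∈ G k, v i = 0 := by
    intro k hk i hi
    have hsum : ∑ i ∈ G k, v i ^ 2 = 0 := by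
      have := hnv_sq k; rw [hk] at this; simpa using this.symm
    have := (Finset.sum_eq_zero_iff_of_nonneg (fun i _ => sq_nonneg (v i))).mp hsum i hi
    exact pow_eq_zero_iff (by norm_num) |>.mp this
  have hnw_zero : ∀ k, nw k = 0 → ∀ i ∈ G k, w i = 0 := by
    intro k hk i hi
    have hsum : ∑ i ∈ G k, w i ^ 2 = 0 := by
      have := hnw_sq k; rw [hk] at this; simpa using this.symm
    have := (Finset.sum_eq_zero_iff_of_nonneg (fun i _ => sq_nonneg (w i))).mp hsum i hi
    exact pow_eq_zero_iff (by norm_num) |>.mp this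
  -- the construction of z
  set z : Fin p → ℝ := fun i =>
    if nv (κ i) ≠ 0 then v i / nv (κ i)
    else if nw (κ i) ≠ 0 then w i / nw (κ i) else 0 with hzdef
  have hz_on : ∀ k, ∀ i ∈ G k, z i =
      if nv k ≠ 0 then v i / nv k
      else if nw k ≠ 0 then w i / nw k else 0 := by
    intro k i hi
    simp only [hzdef]
    rw [hκuniq i k hi]
  -- sum of squares of z on each group
  have hz_sq : ∀ k, ∑ i ∈ G k, z i ^ 2 ≤ 1 := by
    intro k
    by_cases h1 : nv k ≠ 0
    · have : ∑ i ∈ G k, z i ^ 2 = ∑ i ∈ G k, (v i / nv k) ^ 2 :=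
        Finset.sum_congr rfl (fun i hi => by rw [hz_on k i hi, if_pos h1])
      rw [this]
      simp only [div_pow, ← Finset.sum_div]
      rw [← hnv_sq k, div_self (pow_ne_zero 2 h1)]
    · push_neg at h1
      by_cases h2 : nw k ≠ 0
      · have : ∑ i ∈ G k, z i ^ 2 = ∑ i ∈ G k, (w i / nw k) ^ 2 :=
          Finset.sum_congr rfl (fun i hi => by
            rw [hz_on k i hi, if_neg (by simp [h1]), if_pos h2])
        rw [this]
        simp only [div_pow, ← Finset.sum_div]
        rw [← hnw_sq k, div_self (pow_ne_zero 2 h2)]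
      · have : ∑ i ∈ G k, z i ^ 2 = 0 :=
          Finset.sum_eq_zero (fun i hi => by
            rw [hz_on k i hi, if_neg (by simp [h1]), if_neg h2]; ring)
        rw [this]; norm_num
  have hzsq1 : ∀ k, nv k ≠ 0 → ∑ i ∈ G k, z i ^ 2 = 1 := by
    intro k h1
    have : ∑ i ∈ G k, z i ^ 2 = ∑ i ∈ G k, (v i / nv k) ^ 2 :=
      Finset.sum_congr rfl (fun i hi => by rw [hz_on k i hi, if_pos h1])
    rw [this]
    simp only [div_pow, ← Finset.sum_div]
    rw [← hnv_sq k, div_self (pow_ne_zero 2 h1)]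
  have hz_norm : ∀ k, euclNorm (coordProj (G k) z) ≤ 1 := by
    intro k
    rw [euclNorm_coordProj]
    calc Real.sqrt (∑ i ∈ G k, z i ^ 2) ≤ Real.sqrt 1 := Real.sqrt_le_sqrt (hz_sq k)
      _ = 1 := Real.sqrt_one
  -- dot product with v on each group
  have hzv : ∀ k, ∑ i ∈ G k, z i * v i = nv k := by
    intro k
    by_cases h1 : nv k ≠ 0
    · have : ∑ i ∈ G k, z i * v i = ∑ i ∈ G k, v i ^ 2 / nv k :=
        Finset.sum_congr rfl (fun i hi => by
          rw [hz_on k i hi, if_pos h1]; ring)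
      rw [this, ← Finset.sum_div, ← hnv_sq k, sq, mul_div_assoc,
        div_self h1, mul_one]
    · push_neg at h1
      rw [h1]
      exact Finset.sum_eq_zero (fun i hi => by rw [hnv_zero k h1 i hi, mul_zero])
  -- dot product with w on each group
  have hzw_eq : ∀ k, nv k = 0 → ∑ i ∈ G k, z i * w i = nw k := by
    intro k h1
    by_cases h2 : nw k ≠ 0
    · have : ∑ i ∈ G k, z i * w i = ∑ i ∈ G k, w i ^ 2 / nw k :=
        Finset.sum_congr rfl (fun i hi => by
          rw [hz_on k i hi, if_neg (by simp [h1]), if_pos h2]; ring)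
      rw [this, ← Finset.sum_div, ← hnw_sq k, sq, mul_div_assoc,
        div_self h2, mul_one]
    · push_neg at h2
      rw [h2]
      exact Finset.sum_eq_zero (fun i hi => by rw [hnw_zero k h2 i hi, mul_zero])
  have hzw_ge : ∀ k, nv k ≠ 0 → -(nw k) ≤ ∑ i ∈ G k, z i * w i := by
    intro k h1
    have hcs : ∑ i ∈ G k, -z i * w i
        ≤ Real.sqrt (∑ i ∈ G k, (-z i) ^ 2) * Real.sqrt (∑ i ∈ G k, w i ^ 2) :=
      Real.sum_mul_le_sqrt_mul_sqrt _ _ _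
    have e2 : ∑ i ∈ G k, (-z i) ^ 2 = 1 := by
      rw [Finset.sum_congr rfl fun i _ => neg_sq (z i)]; exact hzsq1 k h1
    have e1 : ∑ i ∈ G k, -z i * w i = -∑ i ∈ G k, z i * w i := by
      rw [← Finset.sum_neg_distrib]
      exact Finset.sum_congr rfl fun i _ => neg_mul _ _
    rw [e1, e2, Real.sqrt_one, one_mul] at hcs
    linarith
  -- general Cauchy-Schwarz bound for z against anything
  have hz_cs : ∀ (x : Fin p → ℝ) (k : Fin M),
      ∑ i ∈ G k, z i * x i ≤ Real.sqrt (∑ i ∈ G k, x i ^ 2) := by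
    intro x k
    calc ∑ i ∈ G k, z i * x i
        ≤ Real.sqrt (∑ i ∈ G k, z i ^ 2) * Real.sqrt (∑ i ∈ G k, x i ^ 2) :=
          Real.sum_mul_le_sqrt_mul_sqrt _ _ _
      _ ≤ 1 * Real.sqrt (∑ i ∈ G k, x i ^ 2) := by
          apply mul_le_mul_of_nonneg_right _ (Real.sqrt_nonneg _)
          calc Real.sqrt (∑ i ∈ G k, z i ^ 2) ≤ Real.sqrt 1 := Real.sqrt_le_sqrt (hz_sq k)
            _ = 1 := Real.sqrt_one
      _ = _ := one_mul _
  have hsum := sum_partition G hdisj hcover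
  -- dotProd z v = groupLassoNorm G v
  have hdzv : dotProd z v = groupLassoNorm G v := by
    rw [dotProd, hsum (fun i => z i * v i), groupLassoNorm]
    exact Finset.sum_congr rfl (fun k _ => by
      rw [hzv k, euclNorm_coordProj])
  -- subgradient property
  have hsubgrad : ∀ h : Fin p → ℝ,
      dotProd z h ≤ groupLassoNorm G (v + h) - groupLassoNorm G v := by
    intro h
    have hlin : dotProd z (v + h) = dotProd z v + dotProd z h := by
      simp only [dotProd, Pi.add_apply, mul_add, Finset.sum_add_distrib]
    have hbound : dotProd z (v + h) ≤ groupLassoNorm G (v + h) := by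
      rw [dotProd, hsum (fun i => z i * (v + h) i), groupLassoNorm]
      apply Finset.sum_le_sum
      intro k _
      rw [euclNorm_coordProj]
      exact hz_cs (v + h) k
    rw [hdzv] at hlin
    linarith
  -- the "bad" group set
  set S : Finset (Fin M) := Finset.univ.filter (fun k => nv k ≠ 0) with hSdef
  have hS_sub : S ⊆ I := by
    intro k hk
    simp only [hSdef, Finset.mem_filter] at hk
    by_contra hkI
    apply hk.2
    have h0 := hv k hkI
    have : ∀ i ∈ G k, v i = 0 := by
      intro i hi
      have := congrFun h0 i
      simpa [coordProj, hi] using this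
    simp only [hnvdef]
    rw [Finset.sum_eq_zero (fun i hi => by rw [this i hi]; ring), Real.sqrt_zero]
  -- norm of w in groups of S is small
  have hwS : ∑ k ∈ S, nw k ≤ ρ / 10 := by
    have h1 : (∑ k ∈ S, nw k) ^ 2 ≤ S.card * ∑ k ∈ S, nw k ^ 2 :=
      sq_sum_le_card_mul_sum_sq
    have h2 : ∑ k ∈ S, nw k ^ 2 ≤ ∑ k, nw k ^ 2 :=
      Finset.sum_le_sum_of_subset_of_nonneg (Finset.subset_univ S)
        (fun k _ _ => sq_nonneg _)
    have h3 : ∑ k, nw k ^ 2 = ∑ i, w i ^ 2 := by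
      rw [hsum (fun i => w i ^ 2)]
      exact Finset.sum_congr rfl (fun k _ => hnw_sq k)
    have h4 : ∑ i, w i ^ 2 ≤ r ^ 2 := by
      have := Real.sqrt_le_sqrt (le_of_eq h3.symm)
      have hw2' : Real.sqrt (∑ i, w i ^ 2) ≤ r := hw2
      calc ∑ i, w i ^ 2 = Real.sqrt (∑ i, w i ^ 2) ^ 2 := by
            rw [Real.sq_sqrt (by positivity)]
        _ ≤ r ^ 2 := by
            apply pow_le_pow_left₀ (Real.sqrt_nonneg _) hw2'
    have hcard : (S.card : ℝ) ≤ I.card := by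
      exact_mod_cast Finset.card_le_card hS_sub
    have h5 : (∑ k ∈ S, nw k) ^ 2 ≤ (I.card : ℝ) * r ^ 2 := by
      calc (∑ k ∈ S, nw k) ^ 2 ≤ S.card * ∑ k ∈ S, nw k ^ 2 := h1
        _ ≤ (I.card : ℝ) * r ^ 2 := by
            apply mul_le_mul hcard (h2.trans (h3.le.trans h4)) _ (Nat.cast_nonneg _)
            positivity
    have h6 : (I.card : ℝ) * r ^ 2 ≤ (ρ / 10) ^ 2 := by
      have : 100 * ((I.card : ℝ) * r ^ 2) ≤ ρ ^ 2 := by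
        have := mul_le_mul_of_nonneg_right hI (sq_nonneg r)
        calc 100 * ((I.card : ℝ) * r ^ 2) = 100 * (I.card : ℝ) * r ^ 2 := by ring
          _ ≤ (ρ / r) ^ 2 * r ^ 2 := this
          _ = ρ ^ 2 := by field_simp
      nlinarith
    have hnn : 0 ≤ ∑ k ∈ S, nw k := Finset.sum_nonneg (fun k _ => hnw_nonneg k)
    nlinarith [sq_nonneg (∑ k ∈ S, nw k - ρ / 10)]
  -- lower bound on dot product with w
  have hdzw : 4 * ρ / 5 ≤ dotProd z w := by
    have hρeq : ∑ k, nw k = ρ := by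
      rw [← hwGL, groupLassoNorm]
      exact Finset.sum_congr rfl (fun k _ => (euclNorm_coordProj _ _).symm)
    have key : ∑ k, (nw k - (if k ∈ S then 2 * nw k else 0)) ≤ dotProd z w := by
      rw [dotProd, hsum (fun i => z i * w i)]
      apply Finset.sum_le_sum
      intro k _
      by_cases hk : nv k ≠ 0
      · have : k ∈ S := by simp [hSdef, hk]
        rw [if_pos this]
        have := hzw_ge k hk
        linarith
      · push_neg at hk
        have : k ∉ S := by simp [hSdef, hk]
        rw [if_neg this, sub_zero, hzw_eq k hk]
    have hsplit : ∑ k, (nw k - (if k ∈ S then 2 * nw k else 0))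
        = ρ - 2 * ∑ k ∈ S, nw k := by
      rw [Finset.sum_sub_distrib, hρeq]
      congr 1
      rw [← Finset.sum_filter]
      have huf : Finset.univ.filter (fun k => k ∈ S) = S := by ext k; simp
      rw [huf, Finset.mul_sum]
    rw [hsplit] at key
    linarith
  -- conclusion
  have hzex : (∀ k, euclNorm (coordProj (G k) z) ≤ 1) ∧
      dotProd z v = groupLassoNorm G v ∧
      (∀ h : Fin p → ℝ,
        dotProd z h ≤ groupLassoNorm G (v + h) - groupLassoNorm G v) ∧
      4 * ρ / 5 ≤ dotProd z w := ⟨hz_norm, hdzv, hsubgrad, hdzw⟩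
  refine ⟨⟨z, hzex⟩, ?_⟩
  -- sSup part
  have hmem : dotProd z w ∈ ((fun z : Fin p → ℝ => dotProd z w) ''
      {z | ∃ v' : Fin p → ℝ, groupLassoNorm G (tstar - v') ≤ ρ / 20 ∧
        ∀ h : Fin p → ℝ,
          dotProd z h ≤ groupLassoNorm G (v' + h) - groupLassoNorm G v'}) := by
    refine ⟨z, ⟨v, ?_, hsubgrad⟩, rfl⟩
    have : tstar - v = u := by rw [htstar]; ext i; simp
    rw [this]
    exact hu
  have hbdd : BddAbove ((fun z : Fin p → ℝ => dotProd z w) ''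
      {z | ∃ v' : Fin p → ℝ, groupLassoNorm G (tstar - v') ≤ ρ / 20 ∧
        ∀ h : Fin p → ℝ,
          dotProd z h ≤ groupLassoNorm G (v' + h) - groupLassoNorm G v'}) := by
    refine ⟨ρ, ?_⟩
    rintro x ⟨z', ⟨v', _, hsub⟩, rfl⟩
    have h1 := hsub w
    have h2 : groupLassoNorm G (v' + w) ≤ groupLassoNorm G v' + groupLassoNorm G w :=
      groupLassoNorm_add_le G v' w
    simp only
    rw [← hwGL]
    linarith
  calc 4 * ρ / 5 ≤ dotProd z w := hdzw
    _ ≤ _ := le_csSup hbdd hmem
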